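/- Let A be an n×n symmetrizable generalized Cartan matrix with Weyl group W acting on ℚ^n. For i ≠ j, the simple roots e_i and e_j lie in the same W-orbit (i.e., there exists w ∈ W with w·e_j = e_i) if and only if i and j lie in the same connected component of the simply laced skeleton of A, i.e., i and j are connected by a path of single edges (edges with A k l = A l k = −1) in the Dynkin diagram. -/

import Mathlib

/-- An integer matrix is a generalized Cartan matrix (GCM). -/
def IsGCM {ι : Type} (A : Matrix ι ι ℤ) : Prop :=
  (∀ i, A i i = 2) ∧ (∀ i j, i ≠ j → A i j ≤ 0) ∧ (∀ i j, A i j = 0 → A j i = 0)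

/-- A GCM is symmetrizable if there are nonzero rationals `d i` with
`d i * A i j = d j * A j i` for all `i, j`. -/
def IsSymmetrizable {ι : Type} (A : Matrix ι ι ℤ) : Prop :=
  ∃ d : ι → ℚ, (∀ i, d i ≠ 0) ∧ ∀ i j, d i * (A i j : ℚ) = d j * (A j i : ℚ)

/-- The Weyl group of an `n × n` GCM `A`: the subgroup of linear automorphisms of `ℚ^n`
generated by the simple reflections `s i`, where `s i (e j) = e j - A i j • e i`. -/
def weylGroup {n : ℕ} (A : Matrix (Fin n) (Fin n) ℤ) :
    Subgroup ((Fin n → ℚ) ≃ₗ[ℚ] (Fin n → ℚ)) :=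
  Subgroup.closure {w | ∃ i, ∀ j, w (Pi.single j 1) =
    (Pi.single j 1 : Fin n → ℚ) - (A i j : ℚ) • (Pi.single i 1 : Fin n → ℚ)}

/-- The orbit of the simple root `e i` under the Weyl group of `A`. -/
def weylOrbit {n : ℕ} (A : Matrix (Fin n) (Fin n) ℤ) (i : Fin n) : Set (Fin n → ℚ) :=
  {v | ∃ w ∈ weylGroup A, w (Pi.single i 1) = v}

/-- The simply laced skeleton of `A`: the simple graph with `i` adjacent to `j` iff
`i ≠ j` and `A i j = -1 = A j i`. -/
def skeleton {n : ℕ} (A : Matrix (Fin n) (Fin n) ℤ) : SimpleGraph (Fin n) where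
  Adj i j := i ≠ j ∧ A i j = -1 ∧ A j i = -1
  symm := by constructor; intro i j h; exact ⟨h.1.symm, h.2.2, h.2.1⟩
  loopless := by constructor; intro i h; exact h.1 rfl

namespace R2

def letterB (k : ℕ) : Bool := k % 2 == 1

def alt : ℕ → List Bool
  | 0 => []
  | r+1 => letterB r :: alt r

def pmap (p q : ℚ) (b : Bool) (x : ℚ × ℚ) : ℚ × ℚ :=
  bif b then (p * x.2 - x.1, x.2) else (x.1, q * x.1 - x.2)

def pairProd (p q : ℚ) : List Bool → (ℚ × ℚ) → (ℚ × ℚ)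
  | [], x => x
  | b :: l, x => pmap p q b (pairProd p q l x)

def xs (p q : ℚ) (r : ℕ) : ℚ × ℚ := pairProd p q (alt r) (1, 0)

lemma pairProd_append (p q : ℚ) (l₁ l₂ : List Bool) (x : ℚ × ℚ) :
    pairProd p q (l₁ ++ l₂) x = pairProd p q l₁ (pairProd p q l₂ x) := by
  induction l₁ with
  | nil => rfl
  | cons b l ih => simp [pairProd, ih]

lemma xs_succ (p q : ℚ) (r : ℕ) : xs p q (r+1) = pmap p q (letterB r) (xs p q r) := rfl

def seg (r k : ℕ) : List Bool := ((List.range k).map (fun i => letterB (r + i))).reverse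

lemma alt_add (r k : ℕ) : alt (r + k) = seg r k ++ alt r := by
  induction k with
  | zero => simp [seg]
  | succ k ih =>
    have : alt (r + (k+1)) = letterB (r + k) :: alt (r + k) := rfl
    rw [this, ih]
    have : seg r (k+1) = letterB (r + k) :: seg r k := by
      simp [seg, List.range_succ]
    rw [this]
    rfl

lemma letterB_mod2 (a b : ℕ) (h : a % 2 = b % 2) : letterB a = letterB b := by
  simp [letterB, h]

lemma seg_mod2 (r k : ℕ) : seg r k = seg (r % 2) k := by
  unfold seg
  congr 1
  apply List.map_congr_left
  intro i _
  exact letterB_mod2 _ _ (by omega)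

/-- periodic reduction of `pairProd (alt r)` given the two period relations -/
lemma red (p q : ℚ) (m' : ℕ) (hm : 1 ≤ m')
    (h0 : ∀ x, pairProd p q (seg 0 m') x = x) (h1 : ∀ x, pairProd p q (seg 1 m') x = x) :
    ∀ r x, pairProd p q (alt r) x = pairProd p q (alt (r % m')) x := by
  intro r
  induction r using Nat.strong_induction_on with
  | _ r ih =>
    intro x
    by_cases h : r < m'
    · rw [Nat.mod_eq_of_lt h]
    · push_neg at h
      obtain ⟨k, rfl⟩ : ∃ k, r = k + m' := ⟨r - m', by omega⟩
      rw [alt_add, pairProd_append]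
      have hseg := seg_mod2 k m'
      have : pairProd p q (seg k m') (pairProd p q (alt k) x) = pairProd p q (alt k) x := by
        rw [hseg]
        rcases Nat.mod_two_eq_zero_or_one k with hk | hk <;> rw [hk]
        · exact h0 _
        · exact h1 _
      rw [this]
      have hmod : (k + m') % m' = k % m' := Nat.add_mod_right k m'
      rw [hmod]
      exact ih k (by omega) x

/-- growth in the infinite (`p*q ≥ 4`) case -/
lemma grow (p q : ℚ) (hp : 1 ≤ p) (hq : 1 ≤ q) (hpq : 4 ≤ p * q) :
    ∀ r, 1 ≤ r → (1 ≤ (xs p q r).1 ∧ 1 ≤ (xs p q r).2 ∧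
      (r % 2 = 1 → 2 * (xs p q r).1 ≤ p * (xs p q r).2) ∧
      (r % 2 = 0 → 2 * (xs p q r).2 ≤ q * (xs p q r).1)) := by
  intro r hr
  induction r, hr using Nat.le_induction with
  | base =>
    have : xs p q 1 = (1, q) := by
      simp [xs, alt, pairProd, pmap, letterB]
    rw [this]
    refine ⟨le_refl 1, hq, fun _ => by simp; nlinarith, fun h => by omega⟩
  | succ r hr ih =>
    obtain ⟨ha, hb, hodd, heven⟩ := ih
    rw [xs_succ]
    set a := (xs p q r).1 with hadef
    set b := (xs p q r).2 with hbdef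
    rcases Nat.mod_two_eq_zero_or_one r with hpar | hpar
    · -- r even : next letter is T (false)
      have hl : letterB r = false := by simp [letterB, hpar]
      have hcond := heven hpar
      rw [hl]
      have h1 : 1 ≤ q * a - b := by nlinarith
      refine ⟨by simpa [pmap] using ha, by simpa [pmap] using h1, ?_, fun h => by omega⟩
      intro _
      show 2 * a ≤ p * (q * a - b)
      nlinarith
    · -- r odd : next letter is S (true)
      have hl : letterB r = true := by simp [letterB, hpar]
      have hcond := hodd hpar
      rw [hl]
      have h1 : 1 ≤ p * b - a := by nlinarith
      refine ⟨by simpa [pmap] using h1, by simpa [pmap] using hb, fun h => by omega, ?_⟩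
      intro _
      show 2 * b ≤ q * (p * b - a)
      nlinarith


/-- conclusion of the rank-2 analysis -/
abbrev Concl (p q : ℚ) (r : ℕ) : Prop :=
  (0 ≤ (xs p q r).1 ∧ 0 ≤ (xs p q r).2 ∧
    ((xs p q r).1 = 0 → (p = 1 ∧ q = 1 ∧ xs p q r = (0,1))) ∧
    ((xs p q r).2 = 0 → xs p q r = (1,0)))
  ∨ (p * q ≤ 3 ∧ ∃ l : List Bool, (∀ x, pairProd p q (alt r ++ [true]) x = pairProd p q l x) ∧
      l.length + 1 ≤ r)

lemma caseBig (p q : ℚ) (hp : 1 ≤ p) (hq : 1 ≤ q) (hpq : 4 ≤ p * q) (r : ℕ) (hr : 1 ≤ r) :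
    Concl p q r := by
  obtain ⟨ha, hb, _, _⟩ := grow p q hp hq hpq r hr
  exact Or.inl ⟨by linarith, by linarith, fun h => absurd h (by linarith),
    fun h => absurd h (by linarith)⟩
lemma letterB_def (k : ℕ) : letterB k = (k % 2 == 1) := rfl


def tab00 : ℕ → ℚ × ℚ
  | 0 => (1,0)
  | 1 => (1,0)
  | 2 => (-1,0)
  | 3 => (-1,0)
  | _ => (0,0)

lemma cyc00 : ∀ r, xs 0 0 r = tab00 (r % 4) := by
  intro r
  induction r with
  | zero => rfl
  | succ r ih =>
    rw [xs_succ, ih]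
    have h1 : (r+1) % 4 = (r % 4 + 1) % 4 := by omega
    have h2 : r % 2 = (r % 4) % 2 := by omega
    rw [h1, letterB_def, h2]
    have hlt : r % 4 < 4 := by omega
    interval_cases h : r % 4 <;> simp [pmap, tab00] <;> norm_num

lemma seg0id00 : ∀ x : ℚ × ℚ, pairProd 0 0 (seg 0 4) x = x := by
  have hseg : seg 0 4 = [true,false,true,false] := by decide
  rintro ⟨a,b⟩
  rw [hseg]
  simp [pairProd, pmap]
  all_goals try constructor
  all_goals ring

lemma seg1id00 : ∀ x : ℚ × ℚ, pairProd 0 0 (seg 1 4) x = x := by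
  have hseg : seg 1 4 = [false,true,false,true] := by decide
  rintro ⟨a,b⟩
  rw [hseg]
  simp [pairProd, pmap]
  all_goals try constructor
  all_goals ring

lemma red00 : ∀ r x, pairProd 0 0 (alt r) x = pairProd 0 0 (alt (r % 4)) x :=
  red 0 0 4 (by norm_num) seg0id00 seg1id00

lemma case00 : ∀ r, 1 ≤ r → Concl 0 0 r := by
  intro r hr
  have hcyc := cyc00 r
  have hlt : r % 4 < 4 := by omega
  interval_cases h : r % 4
  · exact Or.inl (by rw [hcyc]; norm_num [tab00])
  · exact Or.inl (by rw [hcyc]; norm_num [tab00])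
  · refine Or.inr ⟨by norm_num, [false], ?_, by simp; omega⟩
    intro x
    rw [pairProd_append, red00 r, h]
    have ha : alt 2 = [true,false] := by decide
    rw [ha]
    obtain ⟨a,b⟩ := x
    simp [pairProd, pmap]
    all_goals try constructor
    all_goals ring
  · refine Or.inr ⟨by norm_num, [], ?_, by simp; omega⟩
    intro x
    rw [pairProd_append, red00 r, h]
    have ha : alt 3 = [false,true,false] := by decide
    rw [ha]
    obtain ⟨a,b⟩ := x
    simp [pairProd, pmap]
    all_goals try constructor
    all_goals ring


def tab11 : ℕ → ℚ × ℚ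
  | 0 => (1,0)
  | 1 => (1,1)
  | 2 => (0,1)
  | 3 => (0,-1)
  | 4 => (-1,-1)
  | 5 => (-1,0)
  | _ => (0,0)

lemma cyc11 : ∀ r, xs 1 1 r = tab11 (r % 6) := by
  intro r
  induction r with
  | zero => rfl
  | succ r ih =>
    rw [xs_succ, ih]
    have h1 : (r+1) % 6 = (r % 6 + 1) % 6 := by omega
    have h2 : r % 2 = (r % 6) % 2 := by omega
    rw [h1, letterB_def, h2]
    have hlt : r % 6 < 6 := by omega
    interval_cases h : r % 6 <;> simp [pmap, tab11] <;> norm_num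

lemma seg0id11 : ∀ x : ℚ × ℚ, pairProd 1 1 (seg 0 6) x = x := by
  have hseg : seg 0 6 = [true,false,true,false,true,false] := by decide
  rintro ⟨a,b⟩
  rw [hseg]
  simp [pairProd, pmap]
  all_goals try constructor
  all_goals ring

lemma seg1id11 : ∀ x : ℚ × ℚ, pairProd 1 1 (seg 1 6) x = x := by
  have hseg : seg 1 6 = [false,true,false,true,false,true] := by decide
  rintro ⟨a,b⟩
  rw [hseg]
  simp [pairProd, pmap]
  all_goals try constructor
  all_goals ring

lemma red11 : ∀ r x, pairProd 1 1 (alt r) x = pairProd 1 1 (alt (r % 6)) x :=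
  red 1 1 6 (by norm_num) seg0id11 seg1id11

lemma case11 : ∀ r, 1 ≤ r → Concl 1 1 r := by
  intro r hr
  have hcyc := cyc11 r
  have hlt : r % 6 < 6 := by omega
  interval_cases h : r % 6
  · exact Or.inl (by rw [hcyc]; norm_num [tab11])
  · exact Or.inl (by rw [hcyc]; norm_num [tab11])
  · exact Or.inl (by rw [hcyc]; norm_num [tab11])
  · refine Or.inr ⟨by norm_num, [true,false], ?_, by simp; omega⟩
    intro x
    rw [pairProd_append, red11 r, h]
    have ha : alt 3 = [false,true,false] := by decide
    rw [ha]
    obtain ⟨a,b⟩ := x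
    simp [pairProd, pmap]
    all_goals try constructor
    all_goals ring
  · refine Or.inr ⟨by norm_num, [false], ?_, by simp; omega⟩
    intro x
    rw [pairProd_append, red11 r, h]
    have ha : alt 4 = [true,false,true,false] := by decide
    rw [ha]
    obtain ⟨a,b⟩ := x
    simp [pairProd, pmap]
    all_goals try constructor
    all_goals ring
  · refine Or.inr ⟨by norm_num, [], ?_, by simp; omega⟩
    intro x
    rw [pairProd_append, red11 r, h]
    have ha : alt 5 = [false,true,false,true,false] := by decide
    rw [ha]
    obtain ⟨a,b⟩ := x
    simp [pairProd, pmap]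
    all_goals try constructor
    all_goals ring


def tab12 : ℕ → ℚ × ℚ
  | 0 => (1,0)
  | 1 => (1,2)
  | 2 => (1,2)
  | 3 => (1,0)
  | 4 => (-1,0)
  | 5 => (-1,-2)
  | 6 => (-1,-2)
  | 7 => (-1,0)
  | _ => (0,0)

lemma cyc12 : ∀ r, xs 1 2 r = tab12 (r % 8) := by
  intro r
  induction r with
  | zero => rfl
  | succ r ih =>
    rw [xs_succ, ih]
    have h1 : (r+1) % 8 = (r % 8 + 1) % 8 := by omega
    have h2 : r % 2 = (r % 8) % 2 := by omega
    rw [h1, letterB_def, h2]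
    have hlt : r % 8 < 8 := by omega
    interval_cases h : r % 8 <;> simp [pmap, tab12] <;> norm_num

lemma seg0id12 : ∀ x : ℚ × ℚ, pairProd 1 2 (seg 0 8) x = x := by
  have hseg : seg 0 8 = [true,false,true,false,true,false,true,false] := by decide
  rintro ⟨a,b⟩
  rw [hseg]
  simp [pairProd, pmap]
  all_goals try constructor
  all_goals ring

lemma seg1id12 : ∀ x : ℚ × ℚ, pairProd 1 2 (seg 1 8) x = x := by
  have hseg : seg 1 8 = [false,true,false,true,false,true,false,true] := by decide
  rintro ⟨a,b⟩
  rw [hseg]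
  simp [pairProd, pmap]
  all_goals try constructor
  all_goals ring

lemma red12 : ∀ r x, pairProd 1 2 (alt r) x = pairProd 1 2 (alt (r % 8)) x :=
  red 1 2 8 (by norm_num) seg0id12 seg1id12

lemma case12 : ∀ r, 1 ≤ r → Concl 1 2 r := by
  intro r hr
  have hcyc := cyc12 r
  have hlt : r % 8 < 8 := by omega
  interval_cases h : r % 8
  · exact Or.inl (by rw [hcyc]; norm_num [tab12])
  · exact Or.inl (by rw [hcyc]; norm_num [tab12])
  · exact Or.inl (by rw [hcyc]; norm_num [tab12])
  · exact Or.inl (by rw [hcyc]; norm_num [tab12])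
  · refine Or.inr ⟨by norm_num, [false,true,false], ?_, by simp; omega⟩
    intro x
    rw [pairProd_append, red12 r, h]
    have ha : alt 4 = [true,false,true,false] := by decide
    rw [ha]
    obtain ⟨a,b⟩ := x
    simp [pairProd, pmap]
    all_goals try constructor
    all_goals ring
  · refine Or.inr ⟨by norm_num, [true,false], ?_, by simp; omega⟩
    intro x
    rw [pairProd_append, red12 r, h]
    have ha : alt 5 = [false,true,false,true,false] := by decide
    rw [ha]
    obtain ⟨a,b⟩ := x
    simp [pairProd, pmap]
    all_goals try constructor
    all_goals ring
  · refine Or.inr ⟨by norm_num, [false], ?_, by simp; omega⟩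
    intro x
    rw [pairProd_append, red12 r, h]
    have ha : alt 6 = [true,false,true,false,true,false] := by decide
    rw [ha]
    obtain ⟨a,b⟩ := x
    simp [pairProd, pmap]
    all_goals try constructor
    all_goals ring
  · refine Or.inr ⟨by norm_num, [], ?_, by simp; omega⟩
    intro x
    rw [pairProd_append, red12 r, h]
    have ha : alt 7 = [false,true,false,true,false,true,false] := by decide
    rw [ha]
    obtain ⟨a,b⟩ := x
    simp [pairProd, pmap]
    all_goals try constructor
    all_goals ring


def tab21 : ℕ → ℚ × ℚ
  | 0 => (1,0)
  | 1 => (1,1)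
  | 2 => (1,1)
  | 3 => (1,0)
  | 4 => (-1,0)
  | 5 => (-1,-1)
  | 6 => (-1,-1)
  | 7 => (-1,0)
  | _ => (0,0)

lemma cyc21 : ∀ r, xs 2 1 r = tab21 (r % 8) := by
  intro r
  induction r with
  | zero => rfl
  | succ r ih =>
    rw [xs_succ, ih]
    have h1 : (r+1) % 8 = (r % 8 + 1) % 8 := by omega
    have h2 : r % 2 = (r % 8) % 2 := by omega
    rw [h1, letterB_def, h2]
    have hlt : r % 8 < 8 := by omega
    interval_cases h : r % 8 <;> simp [pmap, tab21] <;> norm_num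

lemma seg0id21 : ∀ x : ℚ × ℚ, pairProd 2 1 (seg 0 8) x = x := by
  have hseg : seg 0 8 = [true,false,true,false,true,false,true,false] := by decide
  rintro ⟨a,b⟩
  rw [hseg]
  simp [pairProd, pmap]
  all_goals try constructor
  all_goals ring

lemma seg1id21 : ∀ x : ℚ × ℚ, pairProd 2 1 (seg 1 8) x = x := by
  have hseg : seg 1 8 = [false,true,false,true,false,true,false,true] := by decide
  rintro ⟨a,b⟩
  rw [hseg]
  simp [pairProd, pmap]
  all_goals try constructor
  all_goals ring

lemma red21 : ∀ r x, pairProd 2 1 (alt r) x = pairProd 2 1 (alt (r % 8)) x :=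
  red 2 1 8 (by norm_num) seg0id21 seg1id21

lemma case21 : ∀ r, 1 ≤ r → Concl 2 1 r := by
  intro r hr
  have hcyc := cyc21 r
  have hlt : r % 8 < 8 := by omega
  interval_cases h : r % 8
  · exact Or.inl (by rw [hcyc]; norm_num [tab21])
  · exact Or.inl (by rw [hcyc]; norm_num [tab21])
  · exact Or.inl (by rw [hcyc]; norm_num [tab21])
  · exact Or.inl (by rw [hcyc]; norm_num [tab21])
  · refine Or.inr ⟨by norm_num, [false,true,false], ?_, by simp; omega⟩
    intro x
    rw [pairProd_append, red21 r, h]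
    have ha : alt 4 = [true,false,true,false] := by decide
    rw [ha]
    obtain ⟨a,b⟩ := x
    simp [pairProd, pmap]
    all_goals try constructor
    all_goals ring
  · refine Or.inr ⟨by norm_num, [true,false], ?_, by simp; omega⟩
    intro x
    rw [pairProd_append, red21 r, h]
    have ha : alt 5 = [false,true,false,true,false] := by decide
    rw [ha]
    obtain ⟨a,b⟩ := x
    simp [pairProd, pmap]
    all_goals try constructor
    all_goals ring
  · refine Or.inr ⟨by norm_num, [false], ?_, by simp; omega⟩
    intro x
    rw [pairProd_append, red21 r, h]
    have ha : alt 6 = [true,false,true,false,true,false] := by decide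
    rw [ha]
    obtain ⟨a,b⟩ := x
    simp [pairProd, pmap]
    all_goals try constructor
    all_goals ring
  · refine Or.inr ⟨by norm_num, [], ?_, by simp; omega⟩
    intro x
    rw [pairProd_append, red21 r, h]
    have ha : alt 7 = [false,true,false,true,false,true,false] := by decide
    rw [ha]
    obtain ⟨a,b⟩ := x
    simp [pairProd, pmap]
    all_goals try constructor
    all_goals ring


def tab13 : ℕ → ℚ × ℚ
  | 0 => (1,0)
  | 1 => (1,3)
  | 2 => (2,3)
  | 3 => (2,3)
  | 4 => (1,3)
  | 5 => (1,0)
  | 6 => (-1,0)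
  | 7 => (-1,-3)
  | 8 => (-2,-3)
  | 9 => (-2,-3)
  | 10 => (-1,-3)
  | 11 => (-1,0)
  | _ => (0,0)

lemma cyc13 : ∀ r, xs 1 3 r = tab13 (r % 12) := by
  intro r
  induction r with
  | zero => rfl
  | succ r ih =>
    rw [xs_succ, ih]
    have h1 : (r+1) % 12 = (r % 12 + 1) % 12 := by omega
    have h2 : r % 2 = (r % 12) % 2 := by omega
    rw [h1, letterB_def, h2]
    have hlt : r % 12 < 12 := by omega
    interval_cases h : r % 12 <;> simp [pmap, tab13] <;> norm_num

lemma seg0id13 : ∀ x : ℚ × ℚ, pairProd 1 3 (seg 0 12) x = x := by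
  have hseg : seg 0 12 = [true,false,true,false,true,false,true,false,true,false,true,false] := by decide
  rintro ⟨a,b⟩
  rw [hseg]
  simp [pairProd, pmap]
  all_goals try constructor
  all_goals ring

lemma seg1id13 : ∀ x : ℚ × ℚ, pairProd 1 3 (seg 1 12) x = x := by
  have hseg : seg 1 12 = [false,true,false,true,false,true,false,true,false,true,false,true] := by decide
  rintro ⟨a,b⟩
  rw [hseg]
  simp [pairProd, pmap]
  all_goals try constructor
  all_goals ring

lemma red13 : ∀ r x, pairProd 1 3 (alt r) x = pairProd 1 3 (alt (r % 12)) x :=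
  red 1 3 12 (by norm_num) seg0id13 seg1id13

lemma case13 : ∀ r, 1 ≤ r → Concl 1 3 r := by
  intro r hr
  have hcyc := cyc13 r
  have hlt : r % 12 < 12 := by omega
  interval_cases h : r % 12
  · exact Or.inl (by rw [hcyc]; norm_num [tab13])
  · exact Or.inl (by rw [hcyc]; norm_num [tab13])
  · exact Or.inl (by rw [hcyc]; norm_num [tab13])
  · exact Or.inl (by rw [hcyc]; norm_num [tab13])
  · exact Or.inl (by rw [hcyc]; norm_num [tab13])
  · exact Or.inl (by rw [hcyc]; norm_num [tab13])
  · refine Or.inr ⟨by norm_num, [false,true,false,true,false], ?_, by simp; omega⟩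
    intro x
    rw [pairProd_append, red13 r, h]
    have ha : alt 6 = [true,false,true,false,true,false] := by decide
    rw [ha]
    obtain ⟨a,b⟩ := x
    simp [pairProd, pmap]
    all_goals try constructor
    all_goals ring
  · refine Or.inr ⟨by norm_num, [true,false,true,false], ?_, by simp; omega⟩
    intro x
    rw [pairProd_append, red13 r, h]
    have ha : alt 7 = [false,true,false,true,false,true,false] := by decide
    rw [ha]
    obtain ⟨a,b⟩ := x
    simp [pairProd, pmap]
    all_goals try constructor
    all_goals ring
  · refine Or.inr ⟨by norm_num, [false,true,false], ?_, by simp; omega⟩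
    intro x
    rw [pairProd_append, red13 r, h]
    have ha : alt 8 = [true,false,true,false,true,false,true,false] := by decide
    rw [ha]
    obtain ⟨a,b⟩ := x
    simp [pairProd, pmap]
    all_goals try constructor
    all_goals ring
  · refine Or.inr ⟨by norm_num, [true,false], ?_, by simp; omega⟩
    intro x
    rw [pairProd_append, red13 r, h]
    have ha : alt 9 = [false,true,false,true,false,true,false,true,false] := by decide
    rw [ha]
    obtain ⟨a,b⟩ := x
    simp [pairProd, pmap]
    all_goals try constructor
    all_goals ring
  · refine Or.inr ⟨by norm_num, [false], ?_, by simp; omega⟩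
    intro x
    rw [pairProd_append, red13 r, h]
    have ha : alt 10 = [true,false,true,false,true,false,true,false,true,false] := by decide
    rw [ha]
    obtain ⟨a,b⟩ := x
    simp [pairProd, pmap]
    all_goals try constructor
    all_goals ring
  · refine Or.inr ⟨by norm_num, [], ?_, by simp; omega⟩
    intro x
    rw [pairProd_append, red13 r, h]
    have ha : alt 11 = [false,true,false,true,false,true,false,true,false,true,false] := by decide
    rw [ha]
    obtain ⟨a,b⟩ := x
    simp [pairProd, pmap]
    all_goals try constructor
    all_goals ring


def tab31 : ℕ → ℚ × ℚ
  | 0 => (1,0)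
  | 1 => (1,1)
  | 2 => (2,1)
  | 3 => (2,1)
  | 4 => (1,1)
  | 5 => (1,0)
  | 6 => (-1,0)
  | 7 => (-1,-1)
  | 8 => (-2,-1)
  | 9 => (-2,-1)
  | 10 => (-1,-1)
  | 11 => (-1,0)
  | _ => (0,0)

lemma cyc31 : ∀ r, xs 3 1 r = tab31 (r % 12) := by
  intro r
  induction r with
  | zero => rfl
  | succ r ih =>
    rw [xs_succ, ih]
    have h1 : (r+1) % 12 = (r % 12 + 1) % 12 := by omega
    have h2 : r % 2 = (r % 12) % 2 := by omega
    rw [h1, letterB_def, h2]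
    have hlt : r % 12 < 12 := by omega
    interval_cases h : r % 12 <;> simp [pmap, tab31] <;> norm_num

lemma seg0id31 : ∀ x : ℚ × ℚ, pairProd 3 1 (seg 0 12) x = x := by
  have hseg : seg 0 12 = [true,false,true,false,true,false,true,false,true,false,true,false] := by decide
  rintro ⟨a,b⟩
  rw [hseg]
  simp [pairProd, pmap]
  all_goals try constructor
  all_goals ring

lemma seg1id31 : ∀ x : ℚ × ℚ, pairProd 3 1 (seg 1 12) x = x := by
  have hseg : seg 1 12 = [false,true,false,true,false,true,false,true,false,true,false,true] := by decide
  rintro ⟨a,b⟩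
  rw [hseg]
  simp [pairProd, pmap]
  all_goals try constructor
  all_goals ring

lemma red31 : ∀ r x, pairProd 3 1 (alt r) x = pairProd 3 1 (alt (r % 12)) x :=
  red 3 1 12 (by norm_num) seg0id31 seg1id31

lemma case31 : ∀ r, 1 ≤ r → Concl 3 1 r := by
  intro r hr
  have hcyc := cyc31 r
  have hlt : r % 12 < 12 := by omega
  interval_cases h : r % 12
  · exact Or.inl (by rw [hcyc]; norm_num [tab31])
  · exact Or.inl (by rw [hcyc]; norm_num [tab31])
  · exact Or.inl (by rw [hcyc]; norm_num [tab31])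
  · exact Or.inl (by rw [hcyc]; norm_num [tab31])
  · exact Or.inl (by rw [hcyc]; norm_num [tab31])
  · exact Or.inl (by rw [hcyc]; norm_num [tab31])
  · refine Or.inr ⟨by norm_num, [false,true,false,true,false], ?_, by simp; omega⟩
    intro x
    rw [pairProd_append, red31 r, h]
    have ha : alt 6 = [true,false,true,false,true,false] := by decide
    rw [ha]
    obtain ⟨a,b⟩ := x
    simp [pairProd, pmap]
    all_goals try constructor
    all_goals ring
  · refine Or.inr ⟨by norm_num, [true,false,true,false], ?_, by simp; omega⟩
    intro x
    rw [pairProd_append, red31 r, h]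
    have ha : alt 7 = [false,true,false,true,false,true,false] := by decide
    rw [ha]
    obtain ⟨a,b⟩ := x
    simp [pairProd, pmap]
    all_goals try constructor
    all_goals ring
  · refine Or.inr ⟨by norm_num, [false,true,false], ?_, by simp; omega⟩
    intro x
    rw [pairProd_append, red31 r, h]
    have ha : alt 8 = [true,false,true,false,true,false,true,false] := by decide
    rw [ha]
    obtain ⟨a,b⟩ := x
    simp [pairProd, pmap]
    all_goals try constructor
    all_goals ring
  · refine Or.inr ⟨by norm_num, [true,false], ?_, by simp; omega⟩
    intro x
    rw [pairProd_append, red31 r, h]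
    have ha : alt 9 = [false,true,false,true,false,true,false,true,false] := by decide
    rw [ha]
    obtain ⟨a,b⟩ := x
    simp [pairProd, pmap]
    all_goals try constructor
    all_goals ring
  · refine Or.inr ⟨by norm_num, [false], ?_, by simp; omega⟩
    intro x
    rw [pairProd_append, red31 r, h]
    have ha : alt 10 = [true,false,true,false,true,false,true,false,true,false] := by decide
    rw [ha]
    obtain ⟨a,b⟩ := x
    simp [pairProd, pmap]
    all_goals try constructor
    all_goals ring
  · refine Or.inr ⟨by norm_num, [], ?_, by simp; omega⟩
    intro x
    rw [pairProd_append, red31 r, h]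
    have ha : alt 11 = [false,true,false,true,false,true,false,true,false,true,false] := by decide
    rw [ha]
    obtain ⟨a,b⟩ := x
    simp [pairProd, pmap]
    all_goals try constructor
    all_goals ring

lemma pairMainInt (P Q : ℤ) (hP : 0 ≤ P) (hQ : 0 ≤ Q) (hzPQ : P = 0 → Q = 0)
    (hzQP : Q = 0 → P = 0) (r : ℕ) (hr : 1 ≤ r) : Concl (P : ℚ) (Q : ℚ) r := by
  by_cases h4 : 4 ≤ P * Q
  · have hPne : P ≠ 0 := by rintro rfl; simp at h4
    have hQne : Q ≠ 0 := by rintro rfl; simp at h4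
    have hP1 : (1:ℚ) ≤ (P:ℚ) := by exact_mod_cast by omega
    have hQ1 : (1:ℚ) ≤ (Q:ℚ) := by exact_mod_cast by omega
    have h4' : (4:ℚ) ≤ (P:ℚ) * (Q:ℚ) := by exact_mod_cast h4
    exact caseBig _ _ hP1 hQ1 h4' r hr
  · push_neg at h4
    by_cases hP0 : P = 0
    · have hQ0 := hzPQ hP0
      subst hP0; subst hQ0
      simpa using case00 r hr
    · have hQ0 : Q ≠ 0 := fun h => hP0 (hzQP h)
      have h1P : 1 ≤ P := by omega
      have h1Q : 1 ≤ Q := by omega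
      have hP3 : P ≤ 3 := by nlinarith
      have hQ3 : Q ≤ 3 := by nlinarith
      interval_cases P <;> interval_cases Q <;>
        first
          | omega
          | simpa using case11 r hr
          | simpa using case12 r hr
          | simpa using case21 r hr
          | simpa using case13 r hr
          | simpa using case31 r hr

end R2

namespace GCMAux

variable {n : ℕ} (A : Matrix (Fin n) (Fin n) ℤ) (h2 : ∀ i, A i i = 2)

set_option linter.unusedVariables false

noncomputable def eps (i : Fin n) : Fin n → ℚ := Pi.single i 1

noncomputable def phi (i : Fin n) : (Fin n → ℚ) →ₗ[ℚ] ℚ :=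
  ∑ l, (A i l : ℚ) • LinearMap.proj l

lemma phi_apply (i : Fin n) (v : Fin n → ℚ) :
    phi A i v = ∑ l, (A i l : ℚ) * v l := by
  simp [phi]

lemma phi_eps (i k : Fin n) : phi A i (eps k) = A i k := by
  simp [phi_apply, eps, Pi.single_apply, mul_ite]

noncomputable def rmap (i : Fin n) : (Fin n → ℚ) →ₗ[ℚ] (Fin n → ℚ) :=
  LinearMap.id - LinearMap.smulRight (phi A i) (eps i)

lemma rmap_apply (i : Fin n) (v : Fin n → ℚ) :
    rmap A i v = v - phi A i v • eps i := rfl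

lemma rmap_invol (h2 : ∀ i, A i i = 2) (i : Fin n) (v : Fin n → ℚ) : rmap A i (rmap A i v) = v := by
  have h : phi A i (rmap A i v) = - phi A i v := by
    simp only [rmap_apply, map_sub, map_smul, phi_eps, h2, smul_eq_mul]
    push_cast
    ring
  rw [show rmap A i (rmap A i v) = rmap A i v - phi A i (rmap A i v) • eps i from rfl, h,
    rmap_apply]
  module

noncomputable def σ (i : Fin n) : (Fin n → ℚ) ≃ₗ[ℚ] (Fin n → ℚ) :=
  LinearEquiv.ofLinear (rmap A i) (rmap A i)
    (by ext v; simp [rmap_invol A h2]) (by ext v; simp [rmap_invol A h2])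

lemma σ_apply (i : Fin n) (v : Fin n → ℚ) : σ A h2 i v = v - phi A i v • eps i := rfl

lemma σ_eps (i k : Fin n) : σ A h2 i (eps k) = eps k - (A i k : ℚ) • eps i := by
  rw [σ_apply, phi_eps]

lemma σ_mul_self (i : Fin n) : σ A h2 i * σ A h2 i = 1 := by
  apply LinearEquiv.toLinearMap_injective
  apply LinearMap.ext
  intro v
  exact rmap_invol A h2 i v

lemma σ_inv (i : Fin n) : (σ A h2 i)⁻¹ = σ A h2 i :=
  inv_eq_of_mul_eq_one_right (σ_mul_self A h2 i)

/-- product of the word `l` of simple reflections -/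
noncomputable def wprod (l : List (Fin n)) : (Fin n → ℚ) ≃ₗ[ℚ] (Fin n → ℚ) :=
  (l.map (σ A h2)).prod

@[simp] lemma wprod_nil : wprod A h2 [] = 1 := rfl

@[simp] lemma wprod_cons (i : Fin n) (l : List (Fin n)) :
    wprod A h2 (i :: l) = σ A h2 i * wprod A h2 l := by
  simp [wprod]

lemma wprod_append (l₁ l₂ : List (Fin n)) :
    wprod A h2 (l₁ ++ l₂) = wprod A h2 l₁ * wprod A h2 l₂ := by
  simp [wprod]

lemma wprod_reverse (l : List (Fin n)) :
    wprod A h2 l.reverse = (wprod A h2 l)⁻¹ := by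
  induction l with
  | nil => simp
  | cons i l ih => simp [wprod_append, ih, σ_inv]

lemma eq_σ_of_gen (w : (Fin n → ℚ) ≃ₗ[ℚ] (Fin n → ℚ)) (i : Fin n)
    (h : ∀ j, w (Pi.single j 1) = (Pi.single j 1 : Fin n → ℚ) - (A i j : ℚ) • (Pi.single i 1 : Fin n → ℚ)) :
    w = σ A h2 i := by
  apply LinearEquiv.toLinearMap_injective
  apply LinearMap.pi_ext
  intro j x
  have : (Pi.single j x : Fin n → ℚ) = x • (Pi.single j 1 : Fin n → ℚ) := by
    ext k; simp [Pi.single_apply, mul_ite]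
  rw [this]
  simp only [LinearMap.coe_coe, map_smul]
  have hs := σ_eps A h2 i j
  simp only [eps] at hs
  rw [show (w : (Fin n → ℚ) →ₗ[ℚ] (Fin n → ℚ)) (Pi.single j 1) = w (Pi.single j 1) from rfl,
    show ((σ A h2 i : (Fin n → ℚ) ≃ₗ[ℚ] (Fin n → ℚ)) : (Fin n → ℚ) →ₗ[ℚ] (Fin n → ℚ))
      (Pi.single j 1) = σ A h2 i (Pi.single j 1) from rfl, h j, hs]

lemma σ_mem_weylGroup (i : Fin n) : σ A h2 i ∈ weylGroup A := by
  apply Subgroup.subset_closure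
  exact ⟨i, fun j => by have := σ_eps A h2 i j; simpa [eps] using this⟩

lemma wprod_mem_weylGroup (l : List (Fin n)) : wprod A h2 l ∈ weylGroup A := by
  induction l with
  | nil => simp [Subgroup.one_mem]
  | cons i l ih => rw [wprod_cons]; exact Subgroup.mul_mem _ (σ_mem_weylGroup A h2 i) ih

lemma exists_word_of_mem (w : (Fin n → ℚ) ≃ₗ[ℚ] (Fin n → ℚ)) (hw : w ∈ weylGroup A) :
    ∃ l, wprod A h2 l = w := by
  induction hw using Subgroup.closure_induction with
  | mem x hx =>
    obtain ⟨i, hi⟩ := hx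
    exact ⟨[i], by simp [eq_σ_of_gen A h2 x i hi]⟩
  | one => exact ⟨[], rfl⟩
  | mul x y _ _ hx hy =>
    obtain ⟨lx, hlx⟩ := hx; obtain ⟨ly, hly⟩ := hy
    exact ⟨lx ++ ly, by rw [wprod_append, hlx, hly]⟩
  | inv x _ hx =>
    obtain ⟨lx, hlx⟩ := hx
    exact ⟨lx.reverse, by rw [wprod_reverse, hlx]⟩

/-- length of an element wrt the reflection generators -/
noncomputable def len (w : (Fin n → ℚ) ≃ₗ[ℚ] (Fin n → ℚ)) : ℕ :=
  sInf {r | ∃ l, wprod A h2 l = w ∧ l.length = r}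

lemma len_spec (w : (Fin n → ℚ) ≃ₗ[ℚ] (Fin n → ℚ)) (hw : ∃ l, wprod A h2 l = w) :
    ∃ l, wprod A h2 l = w ∧ l.length = len A h2 w := by
  obtain ⟨l, hl⟩ := hw
  have : {r | ∃ l, wprod A h2 l = w ∧ l.length = r}.Nonempty := ⟨l.length, l, hl, rfl⟩
  exact Nat.sInf_mem this

lemma len_le (w : (Fin n → ℚ) ≃ₗ[ℚ] (Fin n → ℚ)) (l : List (Fin n)) (hl : wprod A h2 l = w) :
    len A h2 w ≤ l.length :=
  Nat.sInf_le ⟨l, hl, rfl⟩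

@[simp] lemma len_one : len A h2 1 = 0 :=
  Nat.le_zero.mp (len_le A h2 1 [] rfl)

lemma eq_one_of_len_zero (w : (Fin n → ℚ) ≃ₗ[ℚ] (Fin n → ℚ)) (hw : ∃ l, wprod A h2 l = w)
    (h : len A h2 w = 0) : w = 1 := by
  obtain ⟨l, hl, hlen⟩ := len_spec A h2 w hw
  rw [h, List.length_eq_zero_iff] at hlen
  rw [hlen] at hl
  exact hl.symm.trans rfl

lemma len_mul_wprod_le (w : (Fin n → ℚ) ≃ₗ[ℚ] (Fin n → ℚ)) (hw : ∃ l, wprod A h2 l = w)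
    (l : List (Fin n)) : len A h2 (w * wprod A h2 l) ≤ len A h2 w + l.length := by
  obtain ⟨l0, hl0, hlen0⟩ := len_spec A h2 w hw
  have : wprod A h2 (l0 ++ l) = w * wprod A h2 l := by rw [wprod_append, hl0]
  calc len A h2 (w * wprod A h2 l) ≤ (l0 ++ l).length := len_le A h2 _ _ this
    _ = len A h2 w + l.length := by simp [hlen0]

lemma len_mul_σ_le (w : (Fin n → ℚ) ≃ₗ[ℚ] (Fin n → ℚ)) (hw : ∃ l, wprod A h2 l = w)
    (t : Fin n) : len A h2 (w * σ A h2 t) ≤ len A h2 w + 1 := by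
  have := len_mul_wprod_le A h2 w hw [t]
  simpa using this

lemma exists_descent (w : (Fin n → ℚ) ≃ₗ[ℚ] (Fin n → ℚ)) (hw : ∃ l, wprod A h2 l = w)
    (hne : w ≠ 1) : ∃ t, len A h2 (w * σ A h2 t) < len A h2 w := by
  obtain ⟨l, hl, hlen⟩ := len_spec A h2 w hw
  have hlne : l ≠ [] := by
    rintro rfl; exact hne (hl.symm.trans rfl)
  rcases List.eq_nil_or_concat l with rfl | ⟨L, t, rfl⟩
  · exact absurd rfl hlne
  refine ⟨t, ?_⟩
  have hw' : w * σ A h2 t = wprod A h2 L := by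
    rw [← hl, List.concat_eq_append, wprod_append]
    simp [mul_assoc, σ_mul_self]
  have h1 : len A h2 (w * σ A h2 t) ≤ L.length := len_le A h2 _ _ hw'.symm
  have h3 : L.length + 1 = len A h2 w := by simpa using hlen
  omega

end GCMAux


namespace GCMAux
open R2

variable {n : ℕ}

def idx (s t : Fin n) (b : Bool) : Fin n := bif b then s else t

@[simp] lemma idx_true (s t : Fin n) : idx s t true = s := rfl
@[simp] lemma idx_false (s t : Fin n) : idx s t false = t := rfl

lemma mul_apply' (e f : (Fin n → ℚ) ≃ₗ[ℚ] (Fin n → ℚ)) (v : Fin n → ℚ) :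
    (e * f) v = e (f v) := rfl

lemma act (A : Matrix (Fin n) (Fin n) ℤ) (h2 : ∀ i, A i i = 2) (s t : Fin n) (b : Bool)
    (a c : ℚ) (z : Fin n → ℚ) (hzs : phi A s z = 0) (hzt : phi A t z = 0) :
    σ A h2 (idx s t b) (a • eps s + c • eps t + z)
      = (R2.pmap (-(A s t : ℚ)) (-(A t s : ℚ)) b (a, c)).1 • eps s
        + (R2.pmap (-(A s t : ℚ)) (-(A t s : ℚ)) b (a, c)).2 • eps t + z := by
  cases b
  · have hphi : phi A t (a • eps s + c • eps t + z) = a * (A t s : ℚ) + c * 2 := by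
      have h22 := h2 t
      simp [map_add, map_smul, phi_eps, hzt, smul_eq_mul, h22]
      all_goals ring
    rw [idx_false, σ_apply, hphi]
    simp only [R2.pmap, cond_false]
    module
  · have hphi : phi A s (a • eps s + c • eps t + z) = a * 2 + c * (A s t : ℚ) := by
      have h22 := h2 s
      simp [map_add, map_smul, phi_eps, hzs, smul_eq_mul, h22]
      all_goals ring
    rw [idx_true, σ_apply, hphi]
    simp only [R2.pmap, cond_true]
    module

lemma wordAct (A : Matrix (Fin n) (Fin n) ℤ) (h2 : ∀ i, A i i = 2) (s t : Fin n)
    (l : List Bool) (a c : ℚ) (z : Fin n → ℚ) (hzs : phi A s z = 0) (hzt : phi A t z = 0) :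
    wprod A h2 (l.map (idx s t)) (a • eps s + c • eps t + z)
      = (R2.pairProd (-(A s t : ℚ)) (-(A t s : ℚ)) l (a, c)).1 • eps s
        + (R2.pairProd (-(A s t : ℚ)) (-(A t s : ℚ)) l (a, c)).2 • eps t + z := by
  induction l with
  | nil => simp [R2.pairProd]
  | cons b l ih =>
    rw [List.map_cons, wprod_cons, mul_apply', ih, act A h2 s t b _ _ z hzs hzt]
    rfl

lemma decomp (A : Matrix (Fin n) (Fin n) ℤ) (h2 : ∀ i, A i i = 2) (s t : Fin n)
    (hdet : (A s t : ℚ) * (A t s : ℚ) ≠ 4) (v : Fin n → ℚ) :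
    ∃ (a c : ℚ) (z : Fin n → ℚ), v = a • eps s + c • eps t + z ∧ phi A s z = 0 ∧ phi A t z = 0 := by
  set D : ℚ := 4 - (A s t : ℚ) * (A t s : ℚ) with hD
  have hDne : D ≠ 0 := by
    intro h; apply hdet; rw [hD] at h; linarith
  refine ⟨(2 * phi A s v - (A s t : ℚ) * phi A t v) / D,
          (2 * phi A t v - (A t s : ℚ) * phi A s v) / D,
          v - ((2 * phi A s v - (A s t : ℚ) * phi A t v) / D) • eps s
            - ((2 * phi A t v - (A t s : ℚ) * phi A s v) / D) • eps t, ?_, ?_, ?_⟩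
  · module
  · simp only [map_sub, map_smul, phi_eps, smul_eq_mul, h2 s]
    push_cast
    field_simp
    ring
  · simp only [map_sub, map_smul, phi_eps, smul_eq_mul, h2 t]
    push_cast
    field_simp
    ring

lemma transfer (A : Matrix (Fin n) (Fin n) ℤ) (h2 : ∀ i, A i i = 2) (s t : Fin n)
    (hdet : (A s t : ℚ) * (A t s : ℚ) ≠ 4) (l₁ l₂ : List Bool)
    (hp : ∀ x, R2.pairProd (-(A s t : ℚ)) (-(A t s : ℚ)) l₁ x
        = R2.pairProd (-(A s t : ℚ)) (-(A t s : ℚ)) l₂ x) :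
    wprod A h2 (l₁.map (idx s t)) = wprod A h2 (l₂.map (idx s t)) := by
  apply LinearEquiv.toLinearMap_injective
  apply LinearMap.ext
  intro v
  obtain ⟨a, c, z, rfl, hzs, hzt⟩ := decomp A h2 s t hdet v
  show wprod A h2 (l₁.map (idx s t)) _ = wprod A h2 (l₂.map (idx s t)) _
  rw [wordAct A h2 s t l₁ a c z hzs hzt, wordAct A h2 s t l₂ a c z hzs hzt, hp]

lemma rank2main (A : Matrix (Fin n) (Fin n) ℤ) (h2 : ∀ i, A i i = 2) (s t : Fin n)
    (hst : s ≠ t) (hneg : ∀ i j, i ≠ j → A i j ≤ 0) (hzero : ∀ i j, A i j = 0 → A j i = 0)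
    (r : ℕ) (hr : 1 ≤ r) :
    (0 ≤ (R2.xs (-(A s t : ℚ)) (-(A t s : ℚ)) r).1 ∧
     0 ≤ (R2.xs (-(A s t : ℚ)) (-(A t s : ℚ)) r).2 ∧
     ((R2.xs (-(A s t : ℚ)) (-(A t s : ℚ)) r).1 = 0 →
        A s t = -1 ∧ A t s = -1 ∧ R2.xs (-(A s t : ℚ)) (-(A t s : ℚ)) r = (0,1)) ∧
     ((R2.xs (-(A s t : ℚ)) (-(A t s : ℚ)) r).2 = 0 →
        R2.xs (-(A s t : ℚ)) (-(A t s : ℚ)) r = (1,0)))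
    ∨ (∃ l : List Bool,
        wprod A h2 ((R2.alt r).map (idx s t) ++ [s]) = wprod A h2 (l.map (idx s t)) ∧
        l.length + 1 ≤ r) := by
  have hcast1 : ((-(A s t) : ℤ) : ℚ) = -(A s t : ℚ) := by push_cast; ring
  have hcast2 : ((-(A t s) : ℤ) : ℚ) = -(A t s : ℚ) := by push_cast; ring
  have hmain := R2.pairMainInt (-(A s t)) (-(A t s)) (by have := hneg s t hst; omega)
    (by have := hneg t s hst.symm; omega)
    (fun h => by have := hzero s t (by omega); omega)
    (fun h => by have := hzero t s (by omega); omega) r hr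
  rw [hcast1, hcast2] at hmain
  rcases hmain with ⟨ha, hb, h0a, h0b⟩ | ⟨hpq3, l, hid, hlen⟩
  · left
    refine ⟨ha, hb, fun h => ?_, h0b⟩
    obtain ⟨hp1, hq1, hx⟩ := h0a h
    refine ⟨?_, ?_, hx⟩
    · have : (A s t : ℚ) = -1 := by linarith
      exact_mod_cast this
    · have : (A t s : ℚ) = -1 := by linarith
      exact_mod_cast this
  · right
    refine ⟨l, ?_, hlen⟩
    have hdet : (A s t : ℚ) * (A t s : ℚ) ≠ 4 := by
      intro h
      rw [show (A s t : ℚ) * (A t s : ℚ) = (-(A s t : ℚ)) * (-(A t s : ℚ)) by ring] at h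
      linarith
    have : (R2.alt r).map (idx s t) ++ [s] = ((R2.alt r ++ [true]).map (idx s t)) := by
      simp
    rw [this]
    exact transfer A h2 s t hdet _ l hid

end GCMAux


namespace GCMAux
open R2

variable {n : ℕ}

abbrev InW (A : Matrix (Fin n) (Fin n) ℤ) (h2 : ∀ i, A i i = 2)
    (w : (Fin n → ℚ) ≃ₗ[ℚ] (Fin n → ℚ)) : Prop := ∃ l, wprod A h2 l = w

lemma wprod_singleton (A : Matrix (Fin n) (Fin n) ℤ) (h2 : ∀ i, A i i = 2) (i : Fin n) :
    wprod A h2 [i] = σ A h2 i := by simp [wprod]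

lemma InW_mul_σ (A : Matrix (Fin n) (Fin n) ℤ) (h2 : ∀ i, A i i = 2)
    {w : (Fin n → ℚ) ≃ₗ[ℚ] (Fin n → ℚ)} (hw : InW A h2 w) (i : Fin n) :
    InW A h2 (w * σ A h2 i) := by
  obtain ⟨l, hl⟩ := hw
  exact ⟨l ++ [i], by rw [wprod_append, wprod_singleton, hl]⟩

lemma eps_ne_zero (i : Fin n) : eps i ≠ 0 := by
  intro h
  have := congrFun h i
  simp [eps] at this

lemma letterB_pred (r : ℕ) (hr : 1 ≤ r) : letterB (r - 1) = ! letterB r := by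
  rcases Nat.mod_two_eq_zero_or_one r with h | h
  · have h' : (r - 1) % 2 = 1 := by omega
    simp [letterB_def, h, h']
  · have h' : (r - 1) % 2 = 0 := by omega
    simp [letterB_def, h, h']

lemma loopAux (A : Matrix (Fin n) (Fin n) ℤ) (h2 : ∀ i, A i i = 2) (s t : Fin n)
    (w : (Fin n → ℚ) ≃ₗ[ℚ] (Fin n → ℚ)) :
    ∀ M (v : (Fin n → ℚ) ≃ₗ[ℚ] (Fin n → ℚ)) (r : ℕ), len A h2 v = M → InW A h2 v → 1 ≤ r →
      w = v * wprod A h2 ((R2.alt r).map (idx s t)) →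
      len A h2 v + r ≤ len A h2 w →
      len A h2 v < len A h2 (v * σ A h2 (idx s t (R2.letterB (r - 1)))) →
      ∃ (v' : (Fin n → ℚ) ≃ₗ[ℚ] (Fin n → ℚ)) (r' : ℕ), InW A h2 v' ∧ 1 ≤ r' ∧
        w = v' * wprod A h2 ((R2.alt r').map (idx s t)) ∧
        len A h2 v' + r' ≤ len A h2 w ∧
        len A h2 v' ≤ len A h2 (v' * σ A h2 s) ∧
        len A h2 v' ≤ len A h2 (v' * σ A h2 t) := by
  intro M
  induction M using Nat.strong_induction_on with
  | _ M ihM =>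
  intro v r hM hInW hr hw hlen hinv
  set x := idx s t (R2.letterB r) with hx
  by_cases hc : len A h2 (v * σ A h2 x) < len A h2 v
  · -- continue the loop
    have hInW' : InW A h2 (v * σ A h2 x) := InW_mul_σ A h2 hInW x
    have hstep : w = (v * σ A h2 x) * wprod A h2 ((R2.alt (r+1)).map (idx s t)) := by
      have halt : (R2.alt (r+1)).map (idx s t) = x :: (R2.alt r).map (idx s t) := by
        simp [R2.alt, hx]
      rw [halt, wprod_cons, mul_assoc, ← mul_assoc (σ A h2 x), σ_mul_self, one_mul, ← hw]
    have hlen' : len A h2 (v * σ A h2 x) + (r + 1) ≤ len A h2 w := by omega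
    have hinv' : len A h2 (v * σ A h2 x) <
        len A h2 ((v * σ A h2 x) * σ A h2 (idx s t (R2.letterB ((r+1) - 1)))) := by
      have : (v * σ A h2 x) * σ A h2 (idx s t (R2.letterB ((r+1) - 1))) = v := by
        have h1 : (r + 1) - 1 = r := rfl
        rw [h1, ← hx, mul_assoc, σ_mul_self, mul_one]
      rw [this]
      exact hc
    exact ihM (len A h2 (v * σ A h2 x)) (hM ▸ hc) _ (r+1) rfl hInW' (by omega) hstep hlen' hinv'
  · -- stop
    push_neg at hc
    have hbn : R2.letterB (r-1) = ! R2.letterB r := letterB_pred r hr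
    refine ⟨v, r, hInW, hr, hw, hlen, ?_, ?_⟩
    · -- ascent at s
      cases hltr : R2.letterB r with
      | true => rw [hx, hltr, idx_true] at hc; exact hc
      | false =>
        rw [hltr] at hbn
        rw [hbn] at hinv
        simpa using le_of_lt hinv
    · -- ascent at t
      cases hltr : R2.letterB r with
      | false => rw [hx, hltr, idx_false] at hc; exact hc
      | true =>
        rw [hltr] at hbn
        rw [hbn] at hinv
        simpa using le_of_lt hinv

lemma startLoop (A : Matrix (Fin n) (Fin n) ℤ) (h2 : ∀ i, A i i = 2) (s t : Fin n)
    (w : (Fin n → ℚ) ≃ₗ[ℚ] (Fin n → ℚ)) (hInW : InW A h2 w)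
    (ht : len A h2 (w * σ A h2 t) < len A h2 w) :
    ∃ (v : (Fin n → ℚ) ≃ₗ[ℚ] (Fin n → ℚ)) (r : ℕ), InW A h2 v ∧ 1 ≤ r ∧
      w = v * wprod A h2 ((R2.alt r).map (idx s t)) ∧
      len A h2 v + r ≤ len A h2 w ∧
      len A h2 v ≤ len A h2 (v * σ A h2 s) ∧
      len A h2 v ≤ len A h2 (v * σ A h2 t) := by
  have hInW1 : InW A h2 (w * σ A h2 t) := InW_mul_σ A h2 hInW t
  have halt1 : (R2.alt 1).map (idx s t) = [t] := rfl
  have hw1 : w = (w * σ A h2 t) * wprod A h2 ((R2.alt 1).map (idx s t)) := by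
    rw [halt1, wprod_singleton, mul_assoc, σ_mul_self, mul_one]
  have hinv1 : len A h2 (w * σ A h2 t) <
      len A h2 ((w * σ A h2 t) * σ A h2 (idx s t (R2.letterB (1 - 1)))) := by
    have : (w * σ A h2 t) * σ A h2 (idx s t (R2.letterB (1 - 1))) = w := by
      have : idx s t (R2.letterB (1-1)) = t := rfl
      rw [this, mul_assoc, σ_mul_self, mul_one]
    rw [this]
    exact ht
  exact loopAux A h2 s t w (len A h2 (w * σ A h2 t)) (w * σ A h2 t) 1 rfl hInW1 le_rfl hw1
    (by omega) hinv1

/-- Key theorem (Tits): if `len (w σ_s) ≥ len w` then `w (eps s)` is a nonzero nonnegative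
vector. -/
lemma posOfAscent (A : Matrix (Fin n) (Fin n) ℤ) (h2 : ∀ i, A i i = 2)
    (hneg : ∀ i j, i ≠ j → A i j ≤ 0) (hzero : ∀ i j, A i j = 0 → A j i = 0) :
    ∀ N (w : (Fin n → ℚ) ≃ₗ[ℚ] (Fin n → ℚ)), len A h2 w = N → InW A h2 w → ∀ s : Fin n,
      len A h2 w ≤ len A h2 (w * σ A h2 s) →
      (∀ k, 0 ≤ w (eps s) k) ∧ w (eps s) ≠ 0 := by
  intro N
  induction N using Nat.strong_induction_on with
  | _ N ihN =>
  intro w hN hInW s hasc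
  by_cases hone : w = 1
  · subst hone
    refine ⟨fun k => ?_, by simpa using eps_ne_zero s⟩
    show (0:ℚ) ≤ eps s k
    rcases eq_or_ne k s with rfl | hks
    · simp [eps]
    · simp [eps, Pi.single_apply, hks]
  · obtain ⟨t, ht⟩ := exists_descent A h2 w hInW hone
    have hts : t ≠ s := by
      rintro rfl
      exact absurd ht (not_lt.mpr hasc)
    have hst : s ≠ t := hts.symm
    obtain ⟨v, r, hvW, hr, hwv, hlenv, ascS, ascT⟩ := startLoop A h2 s t w hInW ht
    have hlenvw : len A h2 v < len A h2 w := by omega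
    have hPos_s := ihN (len A h2 v) (by omega) v rfl hvW s ascS
    have hPos_t := ihN (len A h2 v) (by omega) v rfl hvW t ascT
    rcases rank2main A h2 s t hst hneg hzero r hr with ⟨ha, hb, _, _⟩ | ⟨l, hid, hllen⟩
    · -- good branch : positivity
      have hueps : wprod A h2 ((R2.alt r).map (idx s t)) (eps s)
          = (R2.xs (-(A s t : ℚ)) (-(A t s : ℚ)) r).1 • eps s
            + (R2.xs (-(A s t : ℚ)) (-(A t s : ℚ)) r).2 • eps t := by
        have h0 : phi A s (0 : Fin n → ℚ) = 0 := map_zero _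
        have h0' : phi A t (0 : Fin n → ℚ) = 0 := map_zero _
        have := wordAct A h2 s t (R2.alt r) 1 0 0 h0 h0'
        simp only [one_smul, zero_smul, add_zero] at this
        rw [this]
        rfl
      have hws : w (eps s)
          = (R2.xs (-(A s t : ℚ)) (-(A t s : ℚ)) r).1 • v (eps s)
            + (R2.xs (-(A s t : ℚ)) (-(A t s : ℚ)) r).2 • v (eps t) := by
        rw [hwv, mul_apply', hueps, map_add, map_smul, map_smul]
      refine ⟨fun k => ?_, ?_⟩
      · rw [hws]
        have h1 := hPos_s.1 k
        have h2' := hPos_t.1 k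
        simp only [Pi.add_apply, Pi.smul_apply, smul_eq_mul]
        have := mul_nonneg ha h1
        have := mul_nonneg hb h2'
        linarith
      · intro h
        exact eps_ne_zero s (by simpa using (LinearEquiv.map_eq_zero_iff w).mp h)
    · -- bad branch : contradiction with the ascent hypothesis
      exfalso
      have hws : w * σ A h2 s = v * wprod A h2 (l.map (idx s t)) := by
        rw [hwv, mul_assoc]
        congr 1
        rw [← hid, wprod_append, wprod_singleton]
      have hle : len A h2 (w * σ A h2 s) ≤ len A h2 v + l.length := by
        rw [hws]
        simpa using len_mul_wprod_le A h2 v hvW (l.map (idx s t))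
      omega

/-- if `w` is in the Weyl group and maps `eps j` to `eps i`, then `j` and `i` are connected
in the skeleton graph. -/
lemma reachableOfFix (A : Matrix (Fin n) (Fin n) ℤ) (h2 : ∀ i, A i i = 2)
    (hneg : ∀ i j, i ≠ j → A i j ≤ 0) (hzero : ∀ i j, A i j = 0 → A j i = 0)
    (skel : SimpleGraph (Fin n))
    (hskel : ∀ i j, i ≠ j → A i j = -1 → A j i = -1 → skel.Adj i j) :
    ∀ N (w : (Fin n → ℚ) ≃ₗ[ℚ] (Fin n → ℚ)), len A h2 w = N → InW A h2 w →
      ∀ i j : Fin n, w (eps j) = eps i → skel.Reachable j i := by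
  intro N
  induction N using Nat.strong_induction_on with
  | _ N ihN =>
  intro w hN hInW i j hfix
  by_cases hone : w = 1
  · subst hone
    have : eps j = eps i := by simpa using hfix
    have hji : j = i := by
      by_contra hne
      have := congrFun this j
      simp [eps, Pi.single_apply, hne, Ne.symm hne] at this
    exact hji ▸ SimpleGraph.Reachable.refl j
  · have hasc : len A h2 w ≤ len A h2 (w * σ A h2 j) := by
      by_contra hlt
      push_neg at hlt
      have hWj : InW A h2 (w * σ A h2 j) := InW_mul_σ A h2 hInW j
      have hback : (w * σ A h2 j) * σ A h2 j = w := by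
        rw [mul_assoc, σ_mul_self, mul_one]
      have hasc' : len A h2 (w * σ A h2 j) ≤ len A h2 ((w * σ A h2 j) * σ A h2 j) := by
        rw [hback]; omega
      obtain ⟨hpos, _⟩ := posOfAscent A h2 hneg hzero (len A h2 (w * σ A h2 j)) _ rfl hWj j hasc'
      have hval : (w * σ A h2 j) (eps j) = - eps i := by
        rw [mul_apply', σ_eps, h2 j]
        have : eps j - ((2:ℤ):ℚ) • eps j = - eps j := by
          push_cast
          module
        rw [this, map_neg, hfix]
      have := hpos i
      rw [hval] at this
      simp [eps] at this
      linarith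
    obtain ⟨t, ht⟩ := exists_descent A h2 w hInW hone
    have htj : t ≠ j := by
      rintro rfl
      exact absurd ht (not_lt.mpr hasc)
    have hjt : j ≠ t := htj.symm
    obtain ⟨v, r, hvW, hr, hwv, hlenv, ascJ, ascT⟩ := startLoop A h2 j t w hInW ht
    have hlenvw : len A h2 v < len A h2 w := by omega
    have hPos_j := posOfAscent A h2 hneg hzero (len A h2 v) v rfl hvW j ascJ
    have hPos_t := posOfAscent A h2 hneg hzero (len A h2 v) v rfl hvW t ascT
    rcases rank2main A h2 j t hjt hneg hzero r hr with ⟨ha, hb, h0a, h0b⟩ | ⟨l, hid, hllen⟩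
    · -- good branch
      set a := (R2.xs (-(A j t : ℚ)) (-(A t j : ℚ)) r).1 with hadef
      set b := (R2.xs (-(A j t : ℚ)) (-(A t j : ℚ)) r).2 with hbdef
      have hueps : wprod A h2 ((R2.alt r).map (idx j t)) (eps j) = a • eps j + b • eps t := by
        have h0 : phi A j (0 : Fin n → ℚ) = 0 := map_zero _
        have h0' : phi A t (0 : Fin n → ℚ) = 0 := map_zero _
        have := wordAct A h2 j t (R2.alt r) 1 0 0 h0 h0'
        simp only [one_smul, zero_smul, add_zero] at this
        rw [this]
        rfl
      have hws : eps i = a • v (eps j) + b • v (eps t) := by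
        rw [← hfix, hwv, mul_apply', hueps, map_add, map_smul, map_smul]
      by_cases hb0 : b = 0
      · -- u fixes eps j
        have hx := h0b hb0
        have ha1 : a = 1 := by
          have := congrArg Prod.fst hx
          simpa [← hadef] using this
        have : eps i = v (eps j) := by
          rw [hws, ha1, hb0]
          simp
        exact ihN (len A h2 v) (by omega) v rfl hvW i j this.symm
      · by_cases ha0 : a = 0
        · -- u maps eps j to eps t ; skeleton edge j-t
          obtain ⟨hAjt, hAtj, hx⟩ := h0a ha0
          have hb1 : b = 1 := by
            have := congrArg Prod.snd hx
            simpa [← hbdef] using this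
          have : eps i = v (eps t) := by
            rw [hws, ha0, hb1]
            simp
          have hreach : skel.Reachable t i :=
            ihN (len A h2 v) (by omega) v rfl hvW i t this.symm
          exact (SimpleGraph.Adj.reachable (hskel j t hjt hAjt hAtj)).trans hreach
        · -- both positive : impossible
          exfalso
          have hapos : 0 < a := lt_of_le_of_ne ha (Ne.symm ha0)
          have hbpos : 0 < b := lt_of_le_of_ne hb (Ne.symm hb0)
          set X := v (eps j) with hX
          set Y := v (eps t) with hY
          have hcoord : ∀ k, k ≠ i → X k = 0 ∧ Y k = 0 := by
            intro k hk
            have h0 : a * X k + b * Y k = 0 := by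
              have := congrFun hws k
              simp only [Pi.add_apply, Pi.smul_apply, smul_eq_mul] at this
              rw [show eps i k = 0 by simp [eps, Pi.single_apply, Ne.symm hk]] at this
              linarith
            have h1 := hPos_j.1 k
            have h2' := hPos_t.1 k
            constructor <;> nlinarith
          have hXi : X i ≠ 0 := by
            intro h0
            apply hPos_j.2
            funext k
            rcases eq_or_ne k i with rfl | hk
            · exact h0
            · exact (hcoord k hk).1
          have hYi : Y i ≠ 0 := by
            intro h0
            apply hPos_t.2
            funext k
            rcases eq_or_ne k i with rfl | hk
            · exact h0
            · exact (hcoord k hk).2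
          have hXY : X = (X i / Y i) • Y := by
            funext k
            rcases eq_or_ne k i with rfl | hk
            · rw [Pi.smul_apply, smul_eq_mul, div_mul_cancel₀ _ hYi]
            · simp [Pi.smul_apply, (hcoord k hk).1, (hcoord k hk).2]
          have : eps j = (X i / Y i) • eps t := by
            apply v.injective
            rw [map_smul]
            exact hXY
          have := congrFun this j
          simp [eps, Pi.single_apply, hjt, Ne.symm htj] at this
    · -- bad branch : contradiction
      exfalso
      have hws : w * σ A h2 j = v * wprod A h2 (l.map (idx j t)) := by
        rw [hwv, mul_assoc]
        congr 1
        rw [← hid, wprod_append, wprod_singleton]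
      have hle : len A h2 (w * σ A h2 j) ≤ len A h2 v + l.length := by
        rw [hws]
        simpa using len_mul_wprod_le A h2 v hvW (l.map (idx j t))
      omega

end GCMAux


namespace GCMAux

variable {n : ℕ}

lemma orbit_step (A : Matrix (Fin n) (Fin n) ℤ) (h2 : ∀ i, A i i = 2) (a c : Fin n)
    (h1 : A a c = -1) (h1' : A c a = -1) :
    (σ A h2 c * σ A h2 a) (eps c) = eps a := by
  have e1 : σ A h2 a (eps c) = eps c + eps a := by
    rw [σ_eps, h1]; push_cast; module
  have e2 : σ A h2 c (eps c + eps a) = eps a := by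
    have u1 := σ_eps A h2 c c
    have u2 := σ_eps A h2 c a
    rw [map_add, u1, u2, h2 c, h1']
    push_cast; module
  rw [mul_apply', e1, e2]

lemma orbit_of_walk (A : Matrix (Fin n) (Fin n) ℤ) (h2 : ∀ i, A i i = 2) :
    ∀ {a b : Fin n}, (skeleton A).Walk a b →
      ∃ w ∈ weylGroup A, w (Pi.single b 1) = (Pi.single a 1 : Fin n → ℚ) := by
  intro a b p
  induction p with
  | nil => exact ⟨1, (weylGroup A).one_mem, rfl⟩
  | @cons u v b' h p ih =>
    obtain ⟨w, hm, hwv⟩ := ih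
    obtain ⟨huv, h1, h1'⟩ := h
    refine ⟨(σ A h2 v * σ A h2 u) * w,
      mul_mem (mul_mem (σ_mem_weylGroup A h2 v) (σ_mem_weylGroup A h2 u)) hm, ?_⟩
    rw [mul_apply', hwv]
    have := orbit_step A h2 u v h1 h1'
    simpa [eps] using this

end GCMAux

/-- For `i ≠ j`, the simple roots `e i` and `e j` lie in the same Weyl group orbit iff
`i` and `j` are connected by a path of single edges, i.e. lie in the same connected
component of the simply laced skeleton. -/
theorem same_weylOrbit_iff_skeleton_reachable {n : ℕ} (A : Matrix (Fin n) (Fin n) ℤ)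
    (hA : IsGCM A) (hsym : IsSymmetrizable A) (i j : Fin n) (hij : i ≠ j) :
    (∃ w ∈ weylGroup A, w (Pi.single j 1) = (Pi.single i 1 : Fin n → ℚ)) ↔
      (skeleton A).Reachable i j := by
  obtain ⟨h2, hneg, hzero⟩ := hA
  constructor
  · rintro ⟨w, hwmem, hw⟩
    have hInW : GCMAux.InW A h2 w := GCMAux.exists_word_of_mem A h2 w hwmem
    have hfix : w (GCMAux.eps j) = GCMAux.eps i := by simpa [GCMAux.eps] using hw
    have hreach := GCMAux.reachableOfFix A h2 hneg hzero (skeleton A)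
      (fun a b hab ha hb => ⟨hab, ha, hb⟩) (GCMAux.len A h2 w) w rfl hInW i j hfix
    exact hreach.symm
  · intro hr
    obtain ⟨p⟩ := hr
    exact GCMAux.orbit_of_walk A h2 p
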